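/- arXiv:1503.01539 — 2 statements merged into one kernel-verified Lean document; each statement's English description precedes it below -/
import Mathlib

section
/- In a two-player network access game where each player's expected data rate is r_i(σ_j) = (1−σ_j)·R(1) + σ_j·R(2) with R(1) ≥ R(2) > 0, if (R(1) − R(2))/R(2)² < 1, then the best-response map of each player is a contraction on [0,1] with respect to the absolute value metric, and consequently the Nash equilibrium is unique. -/
lemma clamp_lip (x y : ℝ) : |min 1 (max x 0) - min 1 (max y 0)| ≤ |x - y| := by
  have h1 : |max x 0 - max y 0| ≤ |x - y| := abs_max_sub_max_le_abs x y 0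
  rw [abs_sub_le_iff] at h1 ⊢
  obtain ⟨ha, hb⟩ := h1
  rcases le_total (max x 0) 1 with h | h <;> rcases le_total (max y 0) 1 with h' | h'
  · rw [min_eq_right h, min_eq_right h']; exact ⟨ha, hb⟩
  · rw [min_eq_right h, min_eq_left h']; constructor <;> linarith
  · rw [min_eq_left h, min_eq_right h']; constructor <;> linarith
  · rw [min_eq_left h, min_eq_left h']; constructor <;> linarith

theorem two_player_unique_NE (ρ₁ ρ₂ p R₁ R₂ : ℝ) (hρ₁ : 0 < ρ₁) (hρ₂ : 0 < ρ₂)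
    (hp : 0 < p) (hR₂ : 0 < R₂) (hR : R₂ ≤ R₁)
    (hcond : (R₁ - R₂) / R₂ ^ 2 < 1)
    (BR₁ BR₂ : ℝ → ℝ)
    (hBR₁ : ∀ σ, BR₁ σ = min 1 (max (ρ₁ / p - 1 / ((1 - σ) * R₁ + σ * R₂)) 0))
    (hBR₂ : ∀ σ, BR₂ σ = min 1 (max (ρ₂ / p - 1 / ((1 - σ) * R₁ + σ * R₂)) 0)) :
    (∀ σ ∈ Set.Icc (0:ℝ) 1, ∀ σ' ∈ Set.Icc (0:ℝ) 1,
        |BR₁ σ - BR₁ σ'| ≤ (R₁ - R₂) / R₂ ^ 2 * |σ - σ'| ∧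
        |BR₂ σ - BR₂ σ'| ≤ (R₁ - R₂) / R₂ ^ 2 * |σ - σ'|) ∧
    (∀ a b a' b' : ℝ, a ∈ Set.Icc (0:ℝ) 1 → b ∈ Set.Icc (0:ℝ) 1 →
        a' ∈ Set.Icc (0:ℝ) 1 → b' ∈ Set.Icc (0:ℝ) 1 →
        BR₁ b = a → BR₂ a = b → BR₁ b' = a' → BR₂ a' = b' →
        a = a' ∧ b = b') := by
  set K : ℝ := (R₁ - R₂) / R₂ ^ 2 with hKdef
  have hK0 : 0 ≤ K := div_nonneg (by linarith) (by positivity)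
  have hr : ∀ σ ∈ Set.Icc (0:ℝ) 1, R₂ ≤ (1 - σ) * R₁ + σ * R₂ := by
    rintro σ ⟨h0, h1⟩; nlinarith
  have key : ∀ ρ : ℝ, ∀ σ ∈ Set.Icc (0:ℝ) 1, ∀ σ' ∈ Set.Icc (0:ℝ) 1,
      |(ρ / p - 1 / ((1 - σ) * R₁ + σ * R₂)) - (ρ / p - 1 / ((1 - σ') * R₁ + σ' * R₂))|
        ≤ K * |σ - σ'| := by
    intro ρ σ hσ σ' hσ'
    have h1 := hr σ hσ
    have h2 := hr σ' hσ'
    have hpos1 : 0 < (1 - σ) * R₁ + σ * R₂ := lt_of_lt_of_le hR₂ h1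
    have hpos2 : 0 < (1 - σ') * R₁ + σ' * R₂ := lt_of_lt_of_le hR₂ h2
    have hd : (ρ / p - 1 / ((1 - σ) * R₁ + σ * R₂)) - (ρ / p - 1 / ((1 - σ') * R₁ + σ' * R₂))
        = (σ' - σ) * (R₁ - R₂) / (((1 - σ) * R₁ + σ * R₂) * ((1 - σ') * R₁ + σ' * R₂)) := by
      rw [sub_sub_sub_cancel_left, div_sub_div _ _ hpos2.ne' hpos1.ne']
      congr 1 <;> ring
    rw [hd, abs_div, abs_mul, abs_of_nonneg (by linarith : (0:ℝ) ≤ R₁ - R₂),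
      abs_of_pos (mul_pos hpos1 hpos2)]
    have hAB : R₂ ^ 2 ≤ ((1 - σ) * R₁ + σ * R₂) * ((1 - σ') * R₁ + σ' * R₂) := by
      nlinarith
    have step : |σ' - σ| * (R₁ - R₂) / (((1 - σ) * R₁ + σ * R₂) * ((1 - σ') * R₁ + σ' * R₂))
        ≤ |σ' - σ| * (R₁ - R₂) / R₂ ^ 2 := by
      gcongr
    refine step.trans (le_of_eq ?_)
    rw [abs_sub_comm σ' σ, hKdef]
    ring
  have lip : ∀ σ ∈ Set.Icc (0:ℝ) 1, ∀ σ' ∈ Set.Icc (0:ℝ) 1,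
      |BR₁ σ - BR₁ σ'| ≤ K * |σ - σ'| ∧ |BR₂ σ - BR₂ σ'| ≤ K * |σ - σ'| := by
    intro σ hσ σ' hσ'
    constructor
    · rw [hBR₁, hBR₁]
      exact le_trans (clamp_lip _ _) (key ρ₁ σ hσ σ' hσ')
    · rw [hBR₂, hBR₂]
      exact le_trans (clamp_lip _ _) (key ρ₂ σ hσ σ' hσ')
  refine ⟨lip, ?_⟩
  intro a b a' b' ha hb ha' hb' h1 h2 h1' h2'
  have e1 : |a - a'| ≤ K * |b - b'| := by
    have := (lip b hb b' hb').1; rwa [h1, h1'] at this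
  have e2 : |b - b'| ≤ K * |a - a'| := by
    have := (lip a ha a' ha').2; rwa [h2, h2'] at this
  have ha0 : |a - a'| = 0 := by
    by_contra h
    have hpos : 0 < |a - a'| := lt_of_le_of_ne (abs_nonneg _) (Ne.symm h)
    nlinarith [mul_le_mul_of_nonneg_left e2 hK0, mul_lt_mul_of_pos_right hcond hpos,
      mul_nonneg hK0 (abs_nonneg (a - a'))]
  have hb0 : |b - b'| = 0 := by
    rw [ha0, mul_zero] at e2
    exact le_antisymm e2 (abs_nonneg _)
  constructor <;> [skip; skip] <;>
    [exact sub_eq_zero.mp (abs_eq_zero.mp ha0); exact sub_eq_zero.mp (abs_eq_zero.mp hb0)]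
end

section
/- If all other users have connection probability σ ∈ [0,1] and R̄ is strictly decreasing with R̄(m) > 0, then the expected data rate r̄(σ) = Σ_{n=0}^{N−1} C(N−1,n)σⁿ(1−σ)^{N−1−n} R̄(n+1) is strictly decreasing in σ (for N ≥ 2). -/
open Finset

lemma bern_hasDerivAt (M : ℕ) (a : ℕ → ℝ) (σ : ℝ) :
    HasDerivAt (fun σ : ℝ => ∑ n ∈ range (M+1),
        (M.choose n : ℝ) * σ ^ n * (1 - σ) ^ (M - n) * a n)
      (∑ n ∈ range (M+1),
        (((M.choose n : ℝ) * ((n : ℝ) * σ ^ (n-1))) * (1-σ)^(M-n)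
          + ((M.choose n : ℝ) * σ ^ n) * (((M-n : ℕ) : ℝ) * (1-σ)^(M-n-1) * (-1))) * a n) σ := by
  apply HasDerivAt.fun_sum
  intro n _
  have h1 : HasDerivAt (fun σ : ℝ => (M.choose n : ℝ) * σ ^ n)
      ((M.choose n : ℝ) * ((n : ℝ) * σ ^ (n-1))) σ := (hasDerivAt_pow n σ).const_mul _
  have h2 : HasDerivAt (fun σ : ℝ => (1-σ) ^ (M-n))
      (((M-n : ℕ) : ℝ) * (1-σ) ^ (M-n-1) * (-1)) σ := by
    have := (hasDerivAt_pow (M-n) (1-σ)).comp σ ((hasDerivAt_id σ).const_sub 1)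
    simpa [Function.comp_def] using this
  exact (h1.mul h2).mul_const (a n)

lemma bern_deriv_eq (M : ℕ) (a : ℕ → ℝ) (σ : ℝ) :
    (∑ n ∈ range (M+1),
        (((M.choose n : ℝ) * ((n : ℝ) * σ ^ (n-1))) * (1-σ)^(M-n)
          + ((M.choose n : ℝ) * σ ^ n) * (((M-n : ℕ) : ℝ) * (1-σ)^(M-n-1) * (-1))) * a n)
    = ∑ n ∈ range M,
        (M.choose n : ℝ) * ((M - n : ℕ) : ℝ) * σ ^ n * (1-σ)^(M-(n+1)) * (a (n+1) - a n) := by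
  have hsplit : ∀ n, (((M.choose n : ℝ) * ((n : ℝ) * σ ^ (n-1))) * (1-σ)^(M-n)
          + ((M.choose n : ℝ) * σ ^ n) * (((M-n : ℕ) : ℝ) * (1-σ)^(M-n-1) * (-1))) * a n
      = (M.choose n : ℝ) * (n : ℝ) * σ ^ (n-1) * (1-σ)^(M-n) * a n
        - (M.choose n : ℝ) * ((M-n : ℕ) : ℝ) * σ ^ n * (1-σ)^(M-n-1) * a n := by
    intro n; ring
  rw [Finset.sum_congr rfl (fun n _ => hsplit n), Finset.sum_sub_distrib]
  rw [Finset.sum_range_succ' (fun n => (M.choose n : ℝ) * (n : ℝ) * σ ^ (n-1) * (1-σ)^(M-n) * a n) M]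
  rw [Finset.sum_range_succ (fun n => (M.choose n : ℝ) * ((M-n : ℕ) : ℝ) * σ ^ n * (1-σ)^(M-n-1) * a n) M]
  simp only [Nat.sub_self, Nat.cast_zero, Nat.cast_ofNat, mul_zero, zero_mul, add_zero,
    Nat.add_sub_cancel]
  rw [← Finset.sum_sub_distrib]
  apply Finset.sum_congr rfl
  intro n hn
  have hn' : n < M := Finset.mem_range.mp hn
  have key : ((M.choose (n+1) : ℕ) : ℝ) * ((n+1 : ℕ) : ℝ) = ((M.choose n : ℕ) : ℝ) * ((M - n : ℕ) : ℝ) := by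
    exact_mod_cast congrArg (Nat.cast : ℕ → ℝ) (Nat.choose_succ_right_eq M n)
  have he : M - n - 1 = M - (n+1) := by omega
  rw [he]
  push_cast at key ⊢
  linear_combination (σ ^ n * (1-σ)^(M-(n+1)) * a (n+1)) * key

theorem expected_rate_strict_anti (N : ℕ) (hN : 2 ≤ N)
    (R : ℕ → ℝ) (hRpos : ∀ m, 0 < R m) (hR : StrictAnti R) :
    StrictAntiOn
      (fun σ : ℝ => ∑ n ∈ Finset.range N,
        ((N - 1).choose n : ℝ) * σ ^ n * (1 - σ) ^ (N - 1 - n) * R (n + 1))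
      (Set.Icc 0 1) := by
  obtain ⟨M, rfl⟩ : ∃ M, N = M + 1 := ⟨N - 1, by omega⟩
  have hM : 1 ≤ M := by omega
  simp only [Nat.add_sub_cancel]
  set a : ℕ → ℝ := fun n => R (n+1) with ha
  apply strictAntiOn_of_deriv_neg (convex_Icc 0 1)
  · apply Continuous.continuousOn
    apply continuous_finset_sum
    intro n _
    fun_prop
  · intro x hx
    rw [interior_Icc] at hx
    rw [(bern_hasDerivAt M a x).deriv, bern_deriv_eq]
    apply Finset.sum_neg
    · intro n hn
      have hn' : n < M := Finset.mem_range.mp hn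
      apply mul_neg_of_pos_of_neg
      · have h1 : (0:ℝ) < (M.choose n : ℝ) := by
          exact_mod_cast Nat.choose_pos (le_of_lt hn')
        have h2 : (0:ℝ) < ((M - n : ℕ) : ℝ) := by
          have : 0 < M - n := by omega
          exact_mod_cast this
        have h3 : (0:ℝ) < x ^ n := pow_pos hx.1 n
        have h4 : (0:ℝ) < (1-x) ^ (M-(n+1)) := pow_pos (by linarith [hx.2]) _
        positivity
      · have := hR (Nat.lt_succ_self (n+1))
        simp only [ha]
        linarith
    · exact ⟨0, Finset.mem_range.mpr hM⟩
end
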